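/- Define, for nonnegative reals A, B, C with A + B + C = 1, the quantities χ_y = −A·log₂A − B·log₂B + (A+B)·log₂(A+B), χ_r = −A·log₂A − C·log₂C + (A+C)·log₂(A+C) (with the convention 0·log₂0 = 0). Then χ_r ≤ 1 − B. -/

import Mathlib

lemma aux_stmt4 (x s : ℝ) (hx : 0 ≤ x) (hs : 0 < s) :
    x * Real.log s - x * Real.log x ≤ x * Real.log 2 + (s / 2 - x) := by
  rcases eq_or_lt_of_le hx with h | h
  · rw [← h]
    simp
    positivity
  · have ht : 0 < s / (2 * x) := by positivity
    have h1 := Real.log_le_sub_one_of_pos ht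
    have hlog : Real.log (s / (2 * x)) = Real.log s - Real.log 2 - Real.log x := by
      rw [Real.log_div (by positivity) (by positivity),
        Real.log_mul (by norm_num) (ne_of_gt h)]
      ring
    rw [hlog] at h1
    have h2 : x * (Real.log s - Real.log 2 - Real.log x) ≤ x * (s / (2 * x) - 1) :=
      mul_le_mul_of_nonneg_left h1 hx
    have h3 : x * (s / (2 * x) - 1) = s / 2 - x := by
      field_simp
    nlinarith

theorem stmt_4 (A B C : ℝ) (hA : 0 ≤ A) (hB : 0 ≤ B) (hC : 0 ≤ C)
    (hsum : A + B + C = 1)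
    (χy χr : ℝ)
    (hχy : χy = -(A * Real.logb 2 A) - B * Real.logb 2 B
        + (A + B) * Real.logb 2 (A + B))
    (hχr : χr = -(A * Real.logb 2 A) - C * Real.logb 2 C
        + (A + C) * Real.logb 2 (A + C)) :
    χr ≤ 1 - B := by
  have hlog2 : 0 < Real.log 2 := Real.log_pos (by norm_num)
  rcases eq_or_lt_of_le (by linarith : (0:ℝ) ≤ A + C) with h0 | hspos
  · have hA0 : A = 0 := by linarith
    have hC0 : C = 0 := by linarith
    rw [hχr, hA0, hC0]
    simp
    linarith
  · rw [hχr, Real.logb, Real.logb, Real.logb,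
      show (1:ℝ) - B = A + C by linarith]
    have heq : -(A * (Real.log A / Real.log 2)) - C * (Real.log C / Real.log 2)
        + (A + C) * (Real.log (A + C) / Real.log 2)
        = (A * Real.log (A + C) - A * Real.log A
          + (C * Real.log (A + C) - C * Real.log C)) / Real.log 2 := by
      field_simp
      ring
    rw [heq, div_le_iff₀ hlog2]
    linarith [aux_stmt4 A (A + C) hA hspos, aux_stmt4 C (A + C) hC hspos]
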